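/- arXiv:1911.10515 — 2 statements merged into one kernel-verified Lean document; each statement's English description precedes it below -/
import Mathlib

section
/- Every connected star graph on at least three vertices has minimum degree at least two. -/
open SimpleGraph

/-- An induced star of `H` with center `v` and leaf set `L`: `L` is a nonempty
independent set of neighbors of `v`. -/
def IsStar {V : Type*} (H : SimpleGraph V) (v : V) (L : Set V) : Prop :=
  L.Nonempty ∧ (∀ u ∈ L, H.Adj v u) ∧ ∀ u ∈ L, ∀ w ∈ L, ¬ H.Adj u w

/-- `S` is the vertex set of an induced star of `H`. -/
def IsStarSet {V : Type*} (H : SimpleGraph V) (S : Set V) : Prop :=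
  ∃ v L, IsStar H v L ∧ S = insert v L

/-- `S` is the vertex set of a maximal induced star of `H`. -/
def IsMaxStarSet {V : Type*} (H : SimpleGraph V) (S : Set V) : Prop :=
  IsStarSet H S ∧ ∀ T, IsStarSet H T → S ⊆ T → S = T

/-- The set of (vertex sets of) maximal induced stars of `H`. -/
def maxStars {V : Type*} (H : SimpleGraph V) : Set (Set V) := {S | IsMaxStarSet H S}

/-- The star graph of `H`: the intersection graph of the maximal induced stars of `H`. -/
def starGraph {V : Type*} (H : SimpleGraph V) : SimpleGraph ↥(maxStars H) :=
  SimpleGraph.fromRel fun S T => ((S : Set V) ∩ (T : Set V)).Nonempty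
section helpers
variable {V : Type*} (H : SimpleGraph V)

lemma exists_maxStar [Fintype V] {A : Set V} (hA : IsStarSet H A) :
    ∃ Z, IsMaxStarSet H Z ∧ A ⊆ Z := by
  classical
  have hfin : {B : Set V | IsStarSet H B ∧ A ⊆ B}.Finite := Set.toFinite _
  have hne : {B : Set V | IsStarSet H B ∧ A ⊆ B}.Nonempty := ⟨A, hA, subset_rfl⟩
  obtain ⟨Z, ⟨hZs, hAZ⟩, hmax⟩ := hfin.exists_maximal hne
  exact ⟨Z, ⟨hZs, fun T hT hZT => Set.Subset.antisymm hZT (hmax ⟨hT, hAZ.trans hZT⟩ hZT)⟩, hAZ⟩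

lemma suffStar [Fintype V] {A S T : Set V} (hA : IsStarSet H A)
    (x : V) (hxA : x ∈ A) (hxS : x ∈ S)
    (y : V) (hyA : y ∈ A) (hyS : y ∉ S)
    (y' : V) (hy'A : y' ∈ A) (hy'T : y' ∉ T) :
    ∃ Z, IsMaxStarSet H Z ∧ Z ≠ S ∧ Z ≠ T ∧ (Z ∩ S).Nonempty := by
  obtain ⟨Z, hZ, hAZ⟩ := exists_maxStar H hA
  refine ⟨Z, hZ, ?_, ?_, ⟨x, hAZ hxA, hxS⟩⟩
  · rintro rfl; exact hyS (hAZ hyA)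
  · rintro rfl; exact hy'T (hAZ hy'A)

lemma isStarSet_pair {a b : V} (h : H.Adj a b) : IsStarSet H {a, b} := by
  refine ⟨a, {b}, ⟨⟨b, rfl⟩, ?_, ?_⟩, rfl⟩
  · intro u hu
    simp only [Set.mem_singleton_iff] at hu
    subst hu; exact h
  · intro u hu w hw
    simp only [Set.mem_singleton_iff] at hu hw
    subst hu; subst hw; exact H.loopless.irrefl _

lemma isStarSet_triple {c a b : V} (h1 : H.Adj c a) (h2 : H.Adj c b) (h3 : ¬H.Adj a b) :
    IsStarSet H {c, a, b} := by
  refine ⟨c, {a, b}, ⟨⟨a, Or.inl rfl⟩, ?_, ?_⟩, rfl⟩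
  · intro u hu
    simp only [Set.mem_insert_iff, Set.mem_singleton_iff] at hu
    rcases hu with rfl | rfl
    · exact h1
    · exact h2
  · intro u hu w hw
    simp only [Set.mem_insert_iff, Set.mem_singleton_iff] at hu hw
    rcases hu with rfl | rfl <;> rcases hw with rfl | rfl
    · exact H.loopless.irrefl _
    · exact h3
    · exact fun h => h3 h.symm
    · exact H.loopless.irrefl _

lemma ext_leaf [Fintype V] {v : V} {L : Set V} (hmax : IsMaxStarSet H (insert v L))
    (hstar : IsStar H v L) {u : V} (hadj : H.Adj v u) (hind : ∀ l ∈ L, ¬H.Adj u l) :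
    u ∈ insert v L := by
  obtain ⟨hLne, hLadj, hLind⟩ := hstar
  have hstar2 : IsStar H v (insert u L) := by
    refine ⟨⟨u, Or.inl rfl⟩, ?_, ?_⟩
    · intro a ha
      simp only [Set.mem_insert_iff] at ha
      rcases ha with rfl | ha
      · exact hadj
      · exact hLadj a ha
    · intro a ha b hb
      simp only [Set.mem_insert_iff] at ha hb
      rcases ha with rfl | ha <;> rcases hb with rfl | hb
      · exact H.loopless.irrefl _
      · exact hind b hb
      · exact fun h => hind a ha h.symm
      · exact hLind a ha b hb
  have hsub : insert v L ⊆ insert v (insert u L) :=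
    Set.insert_subset_insert (Set.subset_insert _ _)
  have heq := hmax.2 _ ⟨v, insert u L, hstar2, rfl⟩ hsub
  rw [heq]
  exact Set.mem_insert_iff.mpr (Or.inr (Set.mem_insert _ _))

lemma mainStar [Fintype V] {S T R : Set V}
    (hS : IsMaxStarSet H S) (hT : IsMaxStarSet H T) (hR : IsMaxStarSet H R)
    (hST : S ≠ T) (hRS : R ≠ S) (hRT : R ≠ T)
    (hSTi : (S ∩ T).Nonempty) (hRTi : (R ∩ T).Nonempty) :
    ∃ Z, IsMaxStarSet H Z ∧ Z ≠ S ∧ Z ≠ T ∧ (Z ∩ S).Nonempty := by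
  by_cases hRSi : (R ∩ S).Nonempty
  · exact ⟨R, hR, hRS, hRT, hRSi⟩
  have hRS0 : ∀ {z : V}, z ∈ R → z ∉ S := fun hz hzS => hRSi ⟨_, hz, hzS⟩
  obtain ⟨hSstar, hSmax⟩ := hS
  obtain ⟨v, L, ⟨hLne, hLadj, hLind⟩, rfl⟩ := hSstar
  obtain ⟨hTstar, hTmax⟩ := hT
  obtain ⟨v', L', ⟨hL'ne, hL'adj, hL'ind⟩, rfl⟩ := hTstar
  have hS' : IsMaxStarSet H (insert v L) := ⟨⟨v, L, ⟨hLne, hLadj, hLind⟩, rfl⟩, hSmax⟩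
  have hT' : IsMaxStarSet H (insert v' L') := ⟨⟨v', L', ⟨hL'ne, hL'adj, hL'ind⟩, rfl⟩, hTmax⟩
  by_cases hvv' : v = v'
  · -- Case A: same center
    subst hvv'
    have hu' : ∃ u', u' ∈ L' ∧ u' ∉ insert v L := by
      by_contra h
      push_neg at h
      have hsub : insert v L' ⊆ insert v L := by
        intro z hz
        rcases Set.mem_insert_iff.mp hz with rfl | hz
        · exact Set.mem_insert _ _
        · exact h z hz
      exact hST (hTmax _ ⟨v, L, ⟨hLne, hLadj, hLind⟩, rfl⟩ hsub).symm
    obtain ⟨u', hu'L', hu'S⟩ := hu'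
    by_cases hz : ∃ z ∈ L, H.Adj z u'
    · obtain ⟨z, hzL, hzadj⟩ := hz
      have hzT : z ∉ insert v L' := by
        intro hzT
        rcases Set.mem_insert_iff.mp hzT with rfl | hzT
        · exact H.loopless.irrefl _ (hLadj z hzL)
        · exact hL'ind z hzT u' hu'L' hzadj
      exact suffStar H (isStarSet_pair H hzadj) z (Set.mem_insert _ _)
        (Set.mem_insert_iff.mpr (Or.inr hzL))
        u' (Set.mem_insert_iff.mpr (Or.inr rfl)) hu'S
        z (Set.mem_insert _ _) hzT
    · push_neg at hz
      exact absurd (ext_leaf H hS' ⟨hLne, hLadj, hLind⟩ (hL'adj u' hu'L')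
        (fun l hl hadj => hz l hl hadj.symm)) hu'S
  · by_cases hvT : v ∈ insert v' L'
    · have hvL' : v ∈ L' := by
        rcases Set.mem_insert_iff.mp hvT with h | h
        · exact absurd h hvv'
        · exact h
      by_cases hv'S : v' ∈ insert v L
      · -- Case B2: v ∈ L', v' ∈ L
        have hv'L : v' ∈ L := by
          rcases Set.mem_insert_iff.mp hv'S with h | h
          · exact absurd h.symm hvv'
          · exact h
        have hadjvv' : H.Adj v v' := hLadj v' hv'L
        obtain ⟨b, hbR, hbT⟩ := hRTi
        have hbS : b ∉ insert v L := hRS0 hbR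
        have hbL' : b ∈ L' := by
          rcases Set.mem_insert_iff.mp hbT with rfl | h
          · exact absurd (Set.mem_insert_iff.mpr (Or.inr hv'L)) hbS
          · exact h
        obtain ⟨hRstar, hRmax⟩ := hR
        obtain ⟨c, M, ⟨hMne, hMadj, hMind⟩, rfl⟩ := hRstar
        have hR' : IsMaxStarSet H (insert c M) := ⟨⟨c, M, ⟨hMne, hMadj, hMind⟩, rfl⟩, hRmax⟩
        rcases Set.mem_insert_iff.mp hbR with hbc | hbM
        · -- b is the center of R
          subst hbc
          have hv'R : v' ∉ insert b M := fun h => hRS0 h (Set.mem_insert_iff.mpr (Or.inr hv'L))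
          have hm : ∃ m ∈ M, H.Adj v' m := by
            by_contra h
            push_neg at h
            exact hv'R (ext_leaf H hR' ⟨hMne, hMadj, hMind⟩ (hL'adj b hbL').symm h)
          obtain ⟨m, hmM, hmadj⟩ := hm
          have hmS : m ∉ insert v L := hRS0 (Set.mem_insert_iff.mpr (Or.inr hmM))
          have hmT : m ∉ insert v' L' := by
            intro h
            rcases Set.mem_insert_iff.mp h with rfl | hmL'
            · exact hmS (Set.mem_insert_iff.mpr (Or.inr hv'L))
            · exact hL'ind b hbL' m hmL' (hMadj m hmM)
          by_cases hvm : H.Adj v m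
          · exact suffStar H (isStarSet_pair H hvm) v (Set.mem_insert _ _) (Set.mem_insert _ _)
              m (Set.mem_insert_iff.mpr (Or.inr rfl)) hmS
              m (Set.mem_insert_iff.mpr (Or.inr rfl)) hmT
          · refine suffStar H (isStarSet_triple H hadjvv'.symm hmadj hvm)
              v (by simp) (Set.mem_insert _ _)
              m (by simp) hmS m (by simp) hmT
        · -- b is a leaf of R, c its center
          have hcS : c ∉ insert v L := hRS0 (Set.mem_insert _ _)
          have hcT : c ∉ insert v' L' := by
            intro h
            rcases Set.mem_insert_iff.mp h with rfl | hcL'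
            · exact hcS (Set.mem_insert_iff.mpr (Or.inr hv'L))
            · exact hL'ind c hcL' b hbL' (hMadj b hbM)
          by_cases hvc : H.Adj v c
          · exact suffStar H (isStarSet_pair H hvc) v (Set.mem_insert _ _) (Set.mem_insert _ _)
              c (Set.mem_insert_iff.mpr (Or.inr rfl)) hcS
              c (Set.mem_insert_iff.mpr (Or.inr rfl)) hcT
          · by_cases hv'c : H.Adj v' c
            · refine suffStar H (isStarSet_triple H hadjvv'.symm hv'c hvc)
                v (by simp) (Set.mem_insert _ _)
                c (by simp) hcS c (by simp) hcT
            · refine suffStar H (isStarSet_triple H (hL'adj b hbL').symm (hMadj b hbM).symm hv'c)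
                v' (by simp) (Set.mem_insert_iff.mpr (Or.inr hv'L))
                c (by simp) hcS c (by simp) hcT
      · -- Case B1: v ∈ L', v' ∉ S
        have hl : ∃ l ∈ L, H.Adj l v' := by
          by_contra h
          push_neg at h
          exact hv'S (ext_leaf H hS' ⟨hLne, hLadj, hLind⟩ (hL'adj v hvL').symm
            (fun l hl hadj => h l hl hadj.symm))
        obtain ⟨l, hlL, hladj⟩ := hl
        have hlT : l ∉ insert v' L' := by
          intro h
          rcases Set.mem_insert_iff.mp h with rfl | hlL'
          · exact hv'S (Set.mem_insert_iff.mpr (Or.inr hlL))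
          · exact hL'ind v hvL' l hlL' (hLadj l hlL)
        exact suffStar H (isStarSet_pair H hladj) l (Set.mem_insert _ _)
          (Set.mem_insert_iff.mpr (Or.inr hlL))
          v' (Set.mem_insert_iff.mpr (Or.inr rfl)) hv'S
          l (Set.mem_insert _ _) hlT
    · by_cases hv'S : v' ∈ insert v L
      · -- Case C1: v ∉ T, v' ∈ L
        have hv'L : v' ∈ L := by
          rcases Set.mem_insert_iff.mp hv'S with h | h
          · exact absurd h.symm hvv'
          · exact h
        have hl' : ∃ l' ∈ L', H.Adj v l' := by
          by_contra h
          push_neg at h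
          exact hvT (ext_leaf H hT' ⟨hL'ne, hL'adj, hL'ind⟩ (hLadj v' hv'L).symm h)
        obtain ⟨l', hl'L', hadj⟩ := hl'
        have hl'S : l' ∉ insert v L := by
          intro h
          rcases Set.mem_insert_iff.mp h with rfl | hl'L
          · exact H.loopless.irrefl _ hadj
          · exact hLind v' hv'L l' hl'L (hL'adj l' hl'L')
        exact suffStar H (isStarSet_pair H hadj) v (Set.mem_insert _ _) (Set.mem_insert _ _)
          l' (Set.mem_insert_iff.mpr (Or.inr rfl)) hl'S
          v (Set.mem_insert _ _) hvT
      · -- Case D: v ∉ T, v' ∉ S, common leaf w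
        obtain ⟨w, hwS, hwT⟩ := hSTi
        have hwL : w ∈ L := by
          rcases Set.mem_insert_iff.mp hwS with rfl | h
          · exact absurd hwT hvT
          · exact h
        have hwL' : w ∈ L' := by
          rcases Set.mem_insert_iff.mp hwT with rfl | h
          · exact absurd hwS hv'S
          · exact h
        by_cases hadj : H.Adj v v'
        · exact suffStar H (isStarSet_pair H hadj) v (Set.mem_insert _ _) (Set.mem_insert _ _)
            v' (Set.mem_insert_iff.mpr (Or.inr rfl)) hv'S
            v (Set.mem_insert _ _) hvT
        · refine suffStar H (isStarSet_triple H (hLadj w hwL).symm (hL'adj w hwL').symm hadj)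
            v (by simp) (Set.mem_insert _ _)
            v' (by simp) hv'S v (by simp) hvT

lemma walk_cross {α : Type*} {G : SimpleGraph α} {x t : α} :
    ∀ {z : α} (_ : G.Walk z x), z ≠ x → z ≠ t →
      ∃ P Q, G.Adj P Q ∧ P ≠ x ∧ P ≠ t ∧ (Q = x ∨ Q = t) := by
  intro z w
  induction w with
  | nil => intro h _; exact absurd rfl h
  | @cons a c d h w ih =>
    intro hzx hzt
    by_cases hc : c = d ∨ c = t
    · exact ⟨a, c, h, hzx, hzt, hc⟩
    · push_neg at hc
      exact ih hc.1 hc.2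

lemma starGraph_adj {a b : ↥(maxStars H)} :
    (_root_.starGraph H).Adj a b ↔ a ≠ b ∧ (((a : Set V) ∩ b).Nonempty ∨ ((b : Set V) ∩ a).Nonempty) :=
  SimpleGraph.fromRel_adj _ _ _

lemma starGraph_adj' {a b : ↥(maxStars H)} (h : (_root_.starGraph H).Adj a b) :
    ((a : Set V) ∩ b).Nonempty := by
  rcases (_root_.starGraph_adj H).mp h with ⟨_, h' | h'⟩
  · exact h'
  · rwa [Set.inter_comm]

end helpers

/-- Every connected star graph on at least three vertices has minimum degree at least two. -/
theorem stmt8 {V : Type*} [Fintype V] (H : SimpleGraph V)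
    (hconn : (_root_.starGraph H).Connected) (h3 : 3 ≤ (maxStars H).ncard) :
    ∀ x : ↥(maxStars H), 2 ≤ ((_root_.starGraph H).neighborSet x).ncard := by
  classical
  intro x
  have hcard : 3 ≤ Nat.card ↥(maxStars H) := by
    rw [Nat.card_coe_set_eq]; exact h3
  have hnontriv : Nontrivial ↥(maxStars H) := by
    exact Finite.one_lt_card_iff_nontrivial.mp (by omega)
  obtain ⟨y, hy⟩ := exists_ne x
  obtain ⟨w⟩ := hconn.preconnected y x
  obtain ⟨P0, Q0, hPQ0, hP0x, _, hQ0⟩ := walk_cross w hy hy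
  have hQ0x : Q0 = x := by rcases hQ0 with h | h <;> exact h
  set T0 := P0 with hT0def
  have hT0adj : (_root_.starGraph H).Adj x T0 := hQ0x ▸ hPQ0.symm
  by_contra hdeg
  push_neg at hdeg
  have hle1 : ((_root_.starGraph H).neighborSet x).ncard ≤ 1 := by omega
  have huniq : ∀ u ∈ (_root_.starGraph H).neighborSet x, u = T0 := by
    intro u hu
    exact (Set.ncard_le_one (Set.toFinite _)).mp hle1 u hu T0 hT0adj
  have hR' : ∃ R' : ↥(maxStars H), R' ≠ x ∧ R' ≠ T0 := by
    by_contra h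
    push_neg at h
    have hsub : (Set.univ : Set ↥(maxStars H)) ⊆ {x, T0} := by
      intro z _
      by_cases hz : z = x
      · exact Or.inl hz
      · exact Or.inr (h z hz)
    have h1 : Nat.card ↥(maxStars H) ≤ 2 := by
      have h2 := Set.ncard_le_ncard hsub (Set.toFinite _)
      rw [Set.ncard_univ] at h2
      have h4 : ({x, T0} : Set ↥(maxStars H)).ncard ≤ 2 := by
        have := Set.ncard_insert_le x ({T0} : Set ↥(maxStars H))
        rw [Set.ncard_singleton] at this
        omega
      omega
    omega
  obtain ⟨R', hR'x, hR'T0⟩ := hR'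
  obtain ⟨w2⟩ := hconn.preconnected R' x
  obtain ⟨P, Q, hPQ, hPx, hPT0, hQ⟩ := walk_cross (t := T0) w2 hR'x hR'T0
  rcases hQ with rfl | rfl
  · exact hPT0 (huniq P hPQ.symm)
  · -- Q = T0 : P is adjacent to T0, P ∉ {x, T0}
    have hSTi : ((x : Set V) ∩ (T0 : Set V)).Nonempty := starGraph_adj' H hT0adj
    have hRTi : ((P : Set V) ∩ (T0 : Set V)).Nonempty := starGraph_adj' H hPQ
    have hSTne : (x : Set V) ≠ (T0 : Set V) :=
      fun h => (((_root_.starGraph_adj H).mp hT0adj).1) (Subtype.ext h)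
    have hRSne : (P : Set V) ≠ (x : Set V) := fun h => hPx (Subtype.ext h)
    have hRTne : (P : Set V) ≠ (T0 : Set V) := fun h => hPT0 (Subtype.ext h)
    obtain ⟨Z, hZmax, hZS, hZT, hZSi⟩ :=
      mainStar H x.2 T0.2 P.2 hSTne hRSne hRTne hSTi hRTi
    have hzadj : (_root_.starGraph H).Adj x ⟨Z, hZmax⟩ := by
      refine (_root_.starGraph_adj H).mpr ⟨?_, Or.inr hZSi⟩
      intro h
      exact hZS (congrArg Subtype.val h).symm
    have := huniq _ hzadj
    exact hZT (congrArg Subtype.val this)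
end

section
/- If H is an induced subgraph of H', then |S(H)| ≤ |S(H')|: every maximal induced star of H either remains a maximal induced star of H' or extends to one, and this assignment from S(H) to S(H') is injective when H' = H + one vertex. -/
open SimpleGraph

lemma starSet_pair {V : Type*} {H : SimpleGraph V} {S : Set V}
    (h : IsStarSet H S) : ∃ a ∈ S, ∃ b ∈ S, H.Adj a b := by
  obtain ⟨v, L, ⟨⟨u, hu⟩, hadj, _⟩, rfl⟩ := h
  exact ⟨v, Set.mem_insert _ _, u, Set.mem_insert_of_mem _ hu, hadj u hu⟩

lemma center_not_mem {V : Type*} {H : SimpleGraph V} {v : V} {L : Set V}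
    (h : IsStar H v L) : v ∉ L := fun hv => (h.2.1 v hv).ne rfl

/-- Forward: star set in induced subgraph gives star set of ambient graph. -/
lemma isStarSet_image {V : Type*} {H : SimpleGraph V} {t : Set V} {S : Set t}
    (h : IsStarSet (H.induce t) S) : IsStarSet H (Subtype.val '' S) := by
  obtain ⟨v, L, ⟨hne, hadj, hind⟩, rfl⟩ := h
  refine ⟨v, Subtype.val '' L, ⟨hne.image _, ?_, ?_⟩, ?_⟩
  · rintro u ⟨u₀, hu₀, rfl⟩
    exact hadj u₀ hu₀
  · rintro u ⟨u₀, hu₀, rfl⟩ w ⟨w₀, hw₀, rfl⟩ hadj'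
    exact hind u₀ hu₀ w₀ hw₀ hadj'
  · rw [Set.image_insert_eq]

/-- Backward: a star set contained in `t` pulls back. -/
lemma isStarSet_preimage {V : Type*} {H : SimpleGraph V} {t : Set V} {T : Set V}
    (hT : IsStarSet H T) (hsub : T ⊆ t) :
    IsStarSet (H.induce t) (Subtype.val ⁻¹' T) ∧
      Subtype.val '' (Subtype.val ⁻¹' T : Set t) = T := by
  obtain ⟨v, L, ⟨⟨u, hu⟩, hadj, hind⟩, rfl⟩ := hT
  have hvt : v ∈ t := hsub (Set.mem_insert _ _)
  have hLt : L ⊆ t := fun x hx => hsub (Set.mem_insert_of_mem _ hx)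
  constructor
  · refine ⟨⟨v, hvt⟩, Subtype.val ⁻¹' L, ⟨⟨⟨u, hLt hu⟩, hu⟩, ?_, ?_⟩, ?_⟩
    · intro x hx
      exact hadj _ hx
    · intro x hx y hy hadj'
      exact hind _ hx _ hy hadj'
    · ext ⟨x, hx⟩
      simp [Subtype.ext_iff]
  · rw [Set.image_preimage_eq_iff]
    rw [Subtype.range_coe]
    exact hsub

/-- If a star set `T` contains a star set `S₀` not containing `y`, then `T \ {y}`
is still a star set. -/
lemma removeY {V : Type*} {H : SimpleGraph V} {T S₀ : Set V} {y : V}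
    (hT : IsStarSet H T) (hS : IsStarSet H S₀) (hsub : S₀ ⊆ T) (hy : y ∉ S₀) :
    IsStarSet H (T \ {y}) := by
  by_cases hyT : y ∈ T
  swap
  · rwa [Set.diff_singleton_eq_self hyT]
  obtain ⟨c, L, hstar, rfl⟩ := hT
  obtain ⟨hne, hadj, hind⟩ := hstar
  have hcL : c ∉ L := center_not_mem ⟨hne, hadj, hind⟩
  obtain ⟨a, ha, b, hb, hab⟩ := starSet_pair hS
  by_cases hyc : y = c
  · -- then S₀ ⊆ L, but L independent and a,b adjacent
    exfalso
    have hSL : S₀ ⊆ L := by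
      intro x hx
      rcases hsub hx with h | h
      · exact absurd (hyc ▸ h ▸ hx) hy
      · exact h
    exact hind a (hSL ha) b (hSL hb) hab
  · have hyL : y ∈ L := by
      rcases hyT with h | h
      · exact absurd h hyc
      · exact h
    have key : ∀ x ∈ S₀, x ≠ c → x ∈ L \ {y} := by
      intro x hx hxc
      rcases hsub hx with h | h
      · exact absurd h hxc
      · exact ⟨h, fun hxy => hy (hxy ▸ hx)⟩
    have hne' : (L \ {y}).Nonempty := by
      by_cases hac : a = c
      · refine ⟨b, key b hb fun hbc => ?_⟩
        exact hab.ne (hac.trans hbc.symm)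
      · exact ⟨a, key a ha hac⟩
    refine ⟨c, L \ {y}, ⟨hne', fun u hu => hadj u hu.1,
      fun u hu w hw => hind u hu.1 w hw.1⟩, ?_⟩
    ext x
    simp only [Set.mem_diff, Set.mem_insert_iff, Set.mem_singleton_iff]
    constructor
    · rintro ⟨h | h, hxy⟩
      · exact Or.inl h
      · exact Or.inr ⟨h, hxy⟩
    · rintro (rfl | ⟨h, hxy⟩)
      · exact ⟨Or.inl rfl, fun h => hyc h.symm⟩
      · exact ⟨Or.inr h, hxy⟩

/-- A maximal star set of an induced subgraph absorbs star supersets inside `t`. -/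
lemma max_pullback {V : Type*} {H : SimpleGraph V} {t : Set V} {S : Set t} {T : Set V}
    (hmax : IsMaxStarSet (H.induce t) S) (hT : IsStarSet H T) (hTt : T ⊆ t)
    (hsub : Subtype.val '' S ⊆ T) : T = Subtype.val '' S := by
  obtain ⟨hpre, himg⟩ := isStarSet_preimage hT hTt
  have hS : S ⊆ Subtype.val ⁻¹' T := fun x hx => hsub ⟨x, hx, rfl⟩
  have := hmax.2 _ hpre hS
  rw [← himg, ← this]

/-- The one-vertex extension map. -/
lemma step {W : Type*} (G : SimpleGraph W) (y : W) :
    ∃ f : ↥(maxStars (G.induce ({y}ᶜ : Set W))) → ↥(maxStars G),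
      Function.Injective f ∧ ∀ S : ↥(maxStars (G.induce ({y}ᶜ : Set W))),
        (f S : Set W) = Subtype.val '' (S : Set ({y}ᶜ : Set W)) ∨
        (f S : Set W) = insert y (Subtype.val '' (S : Set ({y}ᶜ : Set W))) := by
  classical
  set t : Set W := {y}ᶜ with ht
  have key : ∀ S : ↥(maxStars (G.induce t)),
      ∃ T : ↥(maxStars G), (T : Set W) = Subtype.val '' (S : Set t) ∨
        (T : Set W) = insert y (Subtype.val '' (S : Set t)) := by
    intro ⟨S, hSmax⟩
    set S' : Set W := Subtype.val '' S with hS'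
    have hyS' : y ∉ S' := by
      rintro ⟨x, _, hxy⟩
      exact x.2 hxy
    have hS'star : IsStarSet G S' := isStarSet_image hSmax.1
    have habsorb : ∀ T, IsStarSet G T → S' ⊆ T → T = S' ∨ T = insert y S' := by
      intro T hT hsub
      by_cases hyT : y ∈ T
      · have h1 : IsStarSet G (T \ {y}) := removeY hT hS'star hsub hyS'
        have h2 : T \ {y} ⊆ t := fun x hx => hx.2
        have h3 : S' ⊆ T \ {y} := fun x hx => ⟨hsub hx, fun hxy => hyS' (hxy ▸ hx)⟩
        have := max_pullback hSmax h1 h2 h3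
        right
        rw [hS', ← this, Set.insert_diff_singleton, Set.insert_eq_self.mpr hyT]
      · left
        exact max_pullback hSmax hT (fun x hx => fun hxy => hyT (hxy ▸ hx)) hsub
    by_cases h : IsStarSet G (insert y S')
    · refine ⟨⟨insert y S', h, ?_⟩, Or.inr rfl⟩
      intro T hT hsub
      rcases habsorb T hT ((Set.subset_insert _ _).trans hsub) with rfl | rfl
      · exact absurd (hsub (Set.mem_insert _ _)) hyS'
      · rfl
    · refine ⟨⟨S', hS'star, ?_⟩, Or.inl rfl⟩
      intro T hT hsub
      rcases habsorb T hT hsub with rfl | rfl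
      · rfl
      · exact absurd hT h
  choose f hf using key
  refine ⟨f, ?_, hf⟩
  intro S₁ S₂ heq
  have himg : ∀ S : ↥(maxStars (G.induce t)),
      (f S : Set W) \ {y} = Subtype.val '' (S : Set t) := by
    intro S
    have hyS : y ∉ (Subtype.val '' (S : Set t)) := by
      rintro ⟨x, _, hxy⟩
      exact x.2 hxy
    rcases hf S with h | h
    · rw [h, Set.diff_singleton_eq_self hyS]
    · rw [h, Set.insert_diff_of_mem _ (Set.mem_singleton y), Set.diff_singleton_eq_self hyS]
  have : Subtype.val '' (S₁ : Set t) = Subtype.val '' (S₂ : Set t) := by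
    rw [← himg S₁, ← himg S₂, heq]
  have := Set.image_injective.mpr Subtype.val_injective this
  exact Subtype.ext this

lemma isStarSet_map {W₁ W₂ : Type*} {H₁ : SimpleGraph W₁} {H₂ : SimpleGraph W₂}
    (e' : H₁ ≃g H₂) (T : Set W₁) (h : IsStarSet H₁ T) : IsStarSet H₂ (e' '' T) := by
  obtain ⟨v, L, ⟨hne, hadj, hind⟩, rfl⟩ := h
  refine ⟨e' v, e' '' L, ⟨hne.image _, ?_, ?_⟩, by rw [Set.image_insert_eq]⟩
  · rintro u ⟨u₀, hu₀, rfl⟩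
    exact e'.map_adj_iff.mpr (hadj u₀ hu₀)
  · rintro u ⟨u₀, hu₀, rfl⟩ w ⟨w₀, hw₀, rfl⟩ hadj'
    exact hind u₀ hu₀ w₀ hw₀ (e'.map_adj_iff.mp hadj')

lemma isMaxStarSet_map {V₁ V₂ : Type*} {G₁ : SimpleGraph V₁} {G₂ : SimpleGraph V₂}
    (e : G₁ ≃g G₂) {S : Set V₁} (h : IsMaxStarSet G₁ S) : IsMaxStarSet G₂ (e '' S) := by
  refine ⟨isStarSet_map e S h.1, ?_⟩
  intro T hT hsub
  have h1 : IsStarSet G₁ (e.symm '' T) := isStarSet_map e.symm T hT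
  have h2 : S ⊆ e.symm '' T := by
    intro x hx
    exact ⟨e x, hsub ⟨x, hx, rfl⟩, e.symm_apply_apply x⟩
  have := h.2 _ h1 h2
  rw [this, Set.image_image]
  simp

lemma maxStars_ncard_eq_of_iso {V₁ V₂ : Type*} {G₁ : SimpleGraph V₁} {G₂ : SimpleGraph V₂}
    (e : G₁ ≃g G₂) : (maxStars G₁).ncard = (maxStars G₂).ncard := by
  have : maxStars G₂ = (fun S => ⇑e '' S) '' maxStars G₁ := by
    ext T
    constructor
    · intro hT
      refine ⟨e.symm '' T, isMaxStarSet_map e.symm hT, ?_⟩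
      simp only [Set.image_image]
      simp
    · rintro ⟨S, hS, rfl⟩
      exact isMaxStarSet_map e hS
  rw [this, Set.ncard_image_of_injective _ (Set.image_injective.mpr e.injective)]

def induceInsertIso {V : Type*} (H : SimpleGraph V) (s : Set V) (y : V) (hy : y ∉ s) :
    H.induce s ≃g (H.induce (insert y s)).induce
      ({(⟨y, Set.mem_insert y s⟩ : ↥(insert y s))}ᶜ : Set ↥(insert y s)) where
  toEquiv :=
  { toFun := fun x => ⟨⟨x.1, Set.mem_insert_of_mem _ x.2⟩,
      fun h => hy (by
        have hxy : (x : V) = y := congrArg Subtype.val h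
        exact hxy ▸ x.2)⟩
    invFun := fun z => ⟨z.1.1, by
      rcases z.1.2 with h | h
      · exact absurd (Subtype.ext h) z.2
      · exact h⟩
    left_inv := fun x => Subtype.ext rfl
    right_inv := fun z => Subtype.ext (Subtype.ext rfl) }
  map_rel_iff' := by
    intro a b
    simp [SimpleGraph.comap]

lemma step_ncard_le {W : Type*} [Finite W] (G : SimpleGraph W) (y : W) :
    (maxStars (G.induce ({y}ᶜ : Set W))).ncard ≤ (maxStars G).ncard := by
  obtain ⟨f, hf, -⟩ := step G y
  rw [← Nat.card_coe_set_eq, ← Nat.card_coe_set_eq]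
  exact Nat.card_le_card_of_injective f hf

lemma ncard_le_aux {V : Type*} [Fintype V] (H : SimpleGraph V) :
    ∀ (n : ℕ) (s : Set V), sᶜ.ncard = n →
      (maxStars (H.induce s)).ncard ≤ (maxStars H).ncard := by
  intro n
  induction n with
  | zero =>
    intro s hs
    have h0 : sᶜ = ∅ := (Set.ncard_eq_zero (Set.toFinite _)).mp hs
    have : s = Set.univ := by
      rwa [Set.compl_empty_iff] at h0
    subst this
    exact le_of_eq (maxStars_ncard_eq_of_iso (induceUnivIso H))
  | succ n ih =>
    intro s hs
    have hne : sᶜ.Nonempty := by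
      rw [Set.nonempty_iff_ne_empty]
      intro h
      rw [h, Set.ncard_empty] at hs
      omega
    obtain ⟨y, hy⟩ := hne
    have hys : y ∉ s := hy
    have h1 : (insert y s)ᶜ.ncard = n := by
      have : (insert y s)ᶜ = sᶜ \ {y} := by
        ext x; simp [not_or, and_comm]
      rw [this, Set.ncard_diff_singleton_of_mem hy, hs]
      rfl
    calc (maxStars (H.induce s)).ncard
        = (maxStars ((H.induce (insert y s)).induce
            ({(⟨y, Set.mem_insert y s⟩ : ↥(insert y s))}ᶜ))).ncard :=
          maxStars_ncard_eq_of_iso (induceInsertIso H s y hys)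
      _ ≤ (maxStars (H.induce (insert y s))).ncard :=
          step_ncard_le (H.induce (insert y s)) _
      _ ≤ (maxStars H).ncard := ih _ h1

/-- If `H` is an induced subgraph of `H'` then `|S(H)| ≤ |S(H')|`; moreover when
`H' = H + y`, every maximal star of `H` remains maximal or extends by `y`, and this
assignment is injective. -/
theorem stmt13 {V' : Type*} [Fintype V'] (H' : SimpleGraph V') (s : Set V') :
    (maxStars (H'.induce s)).ncard ≤ (maxStars H').ncard ∧
      ∀ y : V', s = ({y}ᶜ : Set V') →
        ∃ f : ↥(maxStars (H'.induce s)) → ↥(maxStars H'),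
          Function.Injective f ∧
            ∀ S : ↥(maxStars (H'.induce s)),
              (f S : Set V') = Subtype.val '' (S : Set s) ∨
              (f S : Set V') = insert y (Subtype.val '' (S : Set s)) := by
  constructor
  · exact ncard_le_aux H' _ s rfl
  · intro y hs
    subst hs
    exact step H' y
end
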